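/- Let N be a nonnegative continuous local martingale under Q with martingale defect m(T) = N_0 − E^Q[N_T], and let C^α(T,K) := E^Q[(N_T − K)^+] + α·m(T) for α ∈ [0,1]. Then for every T ≥ 0 and α < 1: lim_{K→0} C^α(T,K) = αN_0 + (1−α)E^Q[N_T], and consequently N is a strict local martingale if and only if there exists t ≥ 0 such that lim_{K→0} C^α(T,K) < N_0 for all T > t. -/

import Mathlib

open MeasureTheory Set
open Topology

noncomputable section

/-- Local 1/2-Hölder continuity on compacts away from zero. -/
def LocHolderHalf (g : ℝ → ℝ) : Prop :=
  ∀ L > (0:ℝ), ∃ C ≥ (0:ℝ), ∀ x ∈ Icc L⁻¹ L, ∀ y ∈ Icc L⁻¹ L,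
    |g x - g y| ≤ C * |x - y| ^ ((1:ℝ)/2)

/-- A continuous, positive, locally 1/2-Hölder volatility function on (0,∞). -/
def NiceVol (g : ℝ → ℝ) : Prop :=
  ContinuousOn g (Ioi 0) ∧ (∀ x ∈ Ioi (0:ℝ), 0 < g x) ∧ LocHolderHalf g

/-- Standing regularity assumptions (Assumption 2.1) on a time-dependent volatility. -/
def StandingAssumptions (σ' : ℝ → ℝ → ℝ) : Prop :=
  ContinuousOn (fun p : ℝ × ℝ => σ' p.1 p.2) (Ici 0 ×ˢ Ioi 0) ∧
  (∀ t ∈ Ici (0:ℝ), ∀ x ∈ Ioi (0:ℝ), 0 < σ' t x) ∧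
  (∀ L > (0:ℝ), ∃ C ≥ (0:ℝ), ∀ t ∈ Icc (0:ℝ) L, ∀ x ∈ Icc L⁻¹ L, ∀ y ∈ Icc L⁻¹ L,
    |σ' t x - σ' t y| ≤ C * |x - y| ^ ((1:ℝ)/2)) ∧
  ∃ A : ℝ, ∀ t ∈ Ici (0:ℝ), ∀ x ∈ Ioc (0:ℝ) 1, σ' t x ≤ A

variable {Ω : Type*}

/-- `X` is a local martingale on `[r,∞)` w.r.t. the filtration `ℱ`:
there is a localizing sequence of stopping times increasing to `∞`
such that each stopped process is a martingale on `[r,∞)`. -/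
def IsLocalMartingaleFrom {m0 : MeasurableSpace Ω} (r : ℝ)
    (ℱ : Filtration ℝ m0) (μ : Measure Ω) (X : ℝ → Ω → ℝ) : Prop :=
  ∃ τ : ℕ → Ω → ℝ,
    (∀ n, IsStoppingTime ℱ (fun ω => ((τ n ω : ℝ) : WithTop ℝ))) ∧
    (∀ ω, Monotone fun n => τ n ω) ∧
    (∀ ω, Filter.Tendsto (fun n => τ n ω) Filter.atTop Filter.atTop) ∧
    ∀ n, ∀ s t : ℝ, r ≤ s → s ≤ t →
      Integrable (fun ω => X (min t (τ n ω)) ω) μ ∧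
      μ[fun ω => X (min t (τ n ω)) ω | ℱ s] =ᵐ[μ] fun ω => X (min s (τ n ω)) ω

/-- `X` is a (true) martingale on `[r,∞)`. -/
def IsMartingaleFrom {m0 : MeasurableSpace Ω} (r : ℝ)
    (ℱ : Filtration ℝ m0) (μ : Measure Ω) (X : ℝ → Ω → ℝ) : Prop :=
  (∀ t, Integrable (X t) μ) ∧
  ∀ s t : ℝ, r ≤ s → s ≤ t → μ[X t | ℱ s] =ᵐ[μ] X s

/-- `X` is a supermartingale on `[r,∞)`. -/
def IsSupermartingaleFrom {m0 : MeasurableSpace Ω} (r : ℝ)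
    (ℱ : Filtration ℝ m0) (μ : Measure Ω) (X : ℝ → Ω → ℝ) : Prop :=
  (∀ t, StronglyMeasurable[ℱ t] (X t)) ∧ (∀ t, Integrable (X t) μ) ∧
  ∀ s t : ℝ, r ≤ s → s ≤ t → μ[X t | ℱ s] ≤ᵐ[μ] X s

/-- `X` solves the driftless SDE `dX_t = σ'(t,X_t) dW_t` on `[r,∞)` with `X_r = x`,
formulated as the associated (Stroock--Varadhan) martingale problem: `X` is adapted with
continuous paths and, for every `C²` function `f`, the process
`f(X_t) - ∫_r^t σ'(s,X_s)²/2 · f''(X_s) ds` is a local martingale on `[r,∞)`. -/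
def SolvesSDEFrom {m0 : MeasurableSpace Ω} (r : ℝ)
    (ℱ : Filtration ℝ m0) (μ : Measure Ω)
    (σ' : ℝ → ℝ → ℝ) (x : ℝ) (X : ℝ → Ω → ℝ) : Prop :=
  (∀ t, StronglyMeasurable[ℱ t] (X t)) ∧
  (∀ ω, Continuous fun t => X t ω) ∧
  (∀ ω, X r ω = x) ∧
  ∀ f : ℝ → ℝ, ContDiff ℝ 2 f →
    IsLocalMartingaleFrom r ℱ μ
      (fun t ω => f (X t ω) - ∫ s in r..t, σ' s (X s ω) ^ 2 / 2 * deriv (deriv f) (X s ω))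

end

open MeasureTheory Set

open Filter in
/-- A nonnegative local martingale (in the sense of `IsLocalMartingaleFrom`) is a
supermartingale: conditional-Fatou-type argument. -/
lemma supermart_aux {Ω : Type*} {m0 : MeasurableSpace Ω}
    (ℱ : Filtration ℝ m0) (μ : Measure Ω) [IsProbabilityMeasure μ]
    (N : ℝ → Ω → ℝ)
    (hloc : IsLocalMartingaleFrom 0 ℱ μ N)
    (hadp : ∀ t, StronglyMeasurable[ℱ t] (N t))
    (hint : ∀ t, Integrable (N t) μ)
    (hnonneg : ∀ t ω, 0 ≤ N t ω)
    {s t : ℝ} (hs : 0 ≤ s) (hst : s ≤ t) :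
    μ[N t | ℱ s] ≤ᵐ[μ] N s := by
  obtain ⟨τ, hτst, hτmono, hτtop, hτmart⟩ := hloc
  set f : ℕ → Ω → ℝ := fun n ω => N (min t (τ n ω)) ω with hf
  set h : ℕ → Ω → ℝ := fun n ω => N (min s (τ n ω)) ω with hh
  have hf_int : ∀ n, Integrable (f n) μ := fun n => (hτmart n t t (hs.trans hst) le_rfl).1
  have hh_int : ∀ n, Integrable (h n) μ := fun n => (hτmart n s s hs le_rfl).1
  have hcond : ∀ n, μ[f n | ℱ s] =ᵐ[μ] h n := fun n => (hτmart n s t hs hst).2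
  have hKey : ∀ ω, ∃ K : ℕ, ∀ n ≥ K, f n ω = N t ω ∧ h n ω = N s ω := by
    intro ω
    obtain ⟨K, hK⟩ := eventually_atTop.mp ((hτtop ω).eventually_ge_atTop t)
    exact ⟨K, fun n hn => ⟨by simp [hf, min_eq_left (hK n hn)],
      by simp [hh, min_eq_left (hst.trans (hK n hn))]⟩⟩
  set g : ℕ → Ω → ℝ := fun n ω => ⨅ k : ℕ, f (n + k) ω with hg
  have hbdd : ∀ n ω, BddBelow (Set.range fun k : ℕ => f (n + k) ω) := by
    intro n ω; exact ⟨0, by rintro x ⟨k, rfl⟩; exact hnonneg _ _⟩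
  have hg_nonneg : ∀ n ω, 0 ≤ g n ω := fun n ω => le_ciInf fun k => hnonneg _ _
  have hg_le : ∀ n k ω, g n ω ≤ f (n + k) ω := fun n k ω => ciInf_le (hbdd n ω) k
  have hg_mono : ∀ ω, Monotone fun n => g n ω := by
    intro ω a b hab
    refine le_ciInf fun k => ?_
    have := hg_le a (b - a + k) ω
    rwa [show a + (b - a + k) = b + k by omega] at this
  have hg_tendsto : ∀ ω, Tendsto (fun n => g n ω) atTop (𝓝 (N t ω)) := by
    intro ω
    obtain ⟨K, hK⟩ := hKey ω
    refine Tendsto.congr' ?_ tendsto_const_nhds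
    filter_upwards [eventually_ge_atTop K] with n hn
    have hck : ∀ k : ℕ, f (n + k) ω = N t ω :=
      fun k => (hK (n + k) (le_trans hn (Nat.le_add_right _ _))).1
    simp only [hg, hck, ciInf_const]
  have hg_meas : ∀ n, AEStronglyMeasurable (g n) μ := fun n =>
    (AEMeasurable.iInf fun k => (hf_int (n + k)).aemeasurable).aestronglyMeasurable
  have hg_int : ∀ n, Integrable (g n) μ := by
    intro n
    refine Integrable.mono (hf_int n) (hg_meas n) (Eventually.of_forall fun ω => ?_)
    rw [Real.norm_eq_abs, Real.norm_eq_abs, abs_of_nonneg (hg_nonneg n ω)]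
    exact le_trans (by simpa using hg_le n 0 ω) (le_abs_self _)
  have hg_cond : ∀ n, μ[g n | ℱ s] ≤ᵐ[μ] N s := by
    intro n
    have h1 : ∀ k : ℕ, μ[g n | ℱ s] ≤ᵐ[μ] h (n + k) := fun k =>
      (condExp_mono (hg_int n) (hf_int (n + k))
        (Eventually.of_forall fun ω => hg_le n k ω)).trans (hcond (n + k)).le
    have h2 : ∀ᵐ ω ∂μ, ∀ k : ℕ, (μ[g n | ℱ s]) ω ≤ h (n + k) ω := ae_all_iff.mpr h1
    filter_upwards [h2] with ω hω
    obtain ⟨K, hK⟩ := hKey ω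
    have htend : Tendsto (fun k : ℕ => h (n + k) ω) atTop (𝓝 (N s ω)) := by
      refine Tendsto.congr' ?_ tendsto_const_nhds
      filter_upwards [eventually_ge_atTop K] with k hk
      exact ((hK (n + k) (le_trans hk (Nat.le_add_left _ _))).2).symm
    exact ge_of_tendsto' htend hω
  have key : ∀ A : Set Ω, MeasurableSet[ℱ s] A →
      ∫ ω in A, N t ω ∂μ ≤ ∫ ω in A, N s ω ∂μ := by
    intro A hA
    have h1 : Tendsto (fun n => ∫ ω in A, g n ω ∂μ) atTop (𝓝 (∫ ω in A, N t ω ∂μ)) :=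
      integral_tendsto_of_tendsto_of_monotone (fun n => (hg_int n).restrict)
        ((hint t).restrict) (Eventually.of_forall fun ω => hg_mono ω)
        (Eventually.of_forall fun ω => hg_tendsto ω)
    refine le_of_tendsto h1 (Eventually.of_forall fun n => ?_)
    rw [← setIntegral_condExp (ℱ.le s) (hg_int n) hA]
    exact integral_mono_ae integrable_condExp.restrict ((hint s).restrict)
      (ae_restrict_of_ae (hg_cond n))
  have hφm : StronglyMeasurable[ℱ s] (μ[N t | ℱ s]) := stronglyMeasurable_condExp
  refine ae_le_of_ae_le_trim (hm := ℱ.le s) ?_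
  refine ae_le_of_forall_setIntegral_le
    (Integrable.trim (ℱ.le s) integrable_condExp hφm)
    (Integrable.trim (ℱ.le s) (hint s) (hadp s)) ?_
  intro A hA _
  rw [restrict_trim (ℱ.le s) μ hA, ← integral_trim (ℱ.le s) hφm,
    ← integral_trim (ℱ.le s) (hadp s), setIntegral_condExp (ℱ.le s) (hint t) hA]
  exact key A hA

/-- For a nonnegative continuous local martingale `N` with `N₀ = n₀`,
defect `m(T) = n₀ − E[N_T]`, and collateralized call price
`C^α(T,K) = E[(N_T−K)⁺] + α·m(T)` with `α ∈ [0,1)`: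
`lim_{K→0⁺} C^α(T,K) = α n₀ + (1−α) E[N_T]`, and `N` is a strict local martingale
iff there exists `t ≥ 0` such that this limit is `< n₀` for all `T > t`. -/
theorem stmt_6 {Ω : Type*} {m0 : MeasurableSpace Ω}
    (ℱ : Filtration ℝ m0) (μ : Measure Ω) [IsProbabilityMeasure μ]
    (N : ℝ → Ω → ℝ) (n₀ : ℝ)
    (hloc : IsLocalMartingaleFrom 0 ℱ μ N)
    (hadp : ∀ t, StronglyMeasurable[ℱ t] (N t))
    (hint : ∀ t, Integrable (N t) μ)
    (hcontpaths : ∀ ω, Continuous fun t => N t ω)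
    (hnonneg : ∀ t ω, 0 ≤ N t ω)
    (hN0 : ∀ ω, N 0 ω = n₀)
    (α : ℝ) (hα : α ∈ Ico (0:ℝ) 1)
    (m : ℝ → ℝ) (C : ℝ → ℝ → ℝ)
    (hm : ∀ T, m T = n₀ - ∫ ω, N T ω ∂μ)
    (hC : ∀ T K, C T K = (∫ ω, max (N T ω - K) 0 ∂μ) + α * m T) :
    (∀ T ≥ (0:ℝ), Filter.Tendsto (fun K => C T K) (nhdsWithin 0 (Ioi 0))
      (nhds (α * n₀ + (1 - α) * ∫ ω, N T ω ∂μ))) ∧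
    ((IsLocalMartingaleFrom 0 ℱ μ N ∧ ¬ IsMartingaleFrom 0 ℱ μ N) ↔
      ∃ t ≥ (0:ℝ), ∀ T > t, α * n₀ + (1 - α) * (∫ ω, N T ω ∂μ) < n₀) := by
  have hsuper : ∀ s t : ℝ, 0 ≤ s → s ≤ t → μ[N t | ℱ s] ≤ᵐ[μ] N s :=
    fun s t hs hst => supermart_aux ℱ μ N hloc hadp hint hnonneg hs hst
  have hE0 : ∫ ω, N 0 ω ∂μ = n₀ := by
    simp [hN0, measure_univ]
  have hE_mono : ∀ s t : ℝ, 0 ≤ s → s ≤ t → ∫ ω, N t ω ∂μ ≤ ∫ ω, N s ω ∂μ := by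
    intro s t hs hst
    have h1 := integral_mono_ae integrable_condExp (hint s) (hsuper s t hs hst)
    rwa [integral_condExp (ℱ.le s)] at h1
  have hE_le : ∀ T : ℝ, 0 ≤ T → ∫ ω, N T ω ∂μ ≤ n₀ := by
    intro T hT
    have := hE_mono 0 T le_rfl hT
    rwa [hE0] at this
  constructor
  · -- the limit statement
    intro T hT
    set E : ℝ := ∫ ω, N T ω ∂μ with hE
    have hI_int : ∀ K : ℝ, Integrable (fun ω => max (N T ω - K) 0) μ := fun K =>
      ((hint T).sub (integrable_const K)).pos_part
    have h1 : Filter.Tendsto (fun K => ∫ ω, max (N T ω - K) 0 ∂μ)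
        (nhdsWithin 0 (Ioi 0)) (nhds E) := by
      have hlow : Filter.Tendsto (fun K : ℝ => E - K) (nhdsWithin 0 (Ioi 0)) (nhds E) := by
        have : Filter.Tendsto (fun K : ℝ => E - K) (nhds 0) (nhds (E - 0)) :=
          tendsto_const_nhds.sub Filter.tendsto_id
        simpa using this.mono_left nhdsWithin_le_nhds
      refine tendsto_of_tendsto_of_tendsto_of_le_of_le' hlow tendsto_const_nhds ?_ ?_
      · filter_upwards [self_mem_nhdsWithin] with K (hK : 0 < K)
        have : ∫ ω, (N T ω - K) ∂μ ≤ ∫ ω, max (N T ω - K) 0 ∂μ :=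
          integral_mono ((hint T).sub (integrable_const K)) (hI_int K)
            fun ω => le_max_left _ _
        rw [integral_sub (hint T) (integrable_const K)] at this
        simpa [measure_univ] using this
      · filter_upwards [self_mem_nhdsWithin] with K (hK : 0 < K)
        exact integral_mono (hI_int K) (hint T) fun ω =>
          max_le (by linarith) (hnonneg T ω)
    have h2 := h1.add_const (α * m T)
    have hfun : (fun K => C T K) = fun K => (∫ ω, max (N T ω - K) 0 ∂μ) + α * m T :=
      funext fun K => hC T K
    rw [hfun]
    convert h2 using 2
    rw [hm T]
    ring
  · constructor
    · rintro ⟨-, hnm⟩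
      have hex : ∃ T : ℝ, 0 ≤ T ∧ ∫ ω, N T ω ∂μ < n₀ := by
        by_contra hcon
        push_neg at hcon
        apply hnm
        refine ⟨hint, fun s t hs hst => ?_⟩
        have hEeq : ∀ T : ℝ, 0 ≤ T → ∫ ω, N T ω ∂μ = n₀ := fun T hT =>
          le_antisymm (hE_le T hT) (hcon T hT)
        have hle := hsuper s t hs hst
        have hint_ce : Integrable (μ[N t | ℱ s]) μ := integrable_condExp
        have hzero : ∫ ω, (N s ω - (μ[N t | ℱ s]) ω) ∂μ = 0 := by
          rw [integral_sub (hint s) hint_ce, integral_condExp (ℱ.le s),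
            hEeq s hs, hEeq t (hs.trans hst)]
          ring
        have hnn : 0 ≤ᵐ[μ] fun ω => N s ω - (μ[N t | ℱ s]) ω := by
          filter_upwards [hle] with ω hω
          simp only [Pi.zero_apply]
          linarith
        have heq0 : (fun ω => N s ω - (μ[N t | ℱ s]) ω) =ᵐ[μ] 0 :=
          (integral_eq_zero_iff_of_nonneg_ae hnn ((hint s).sub hint_ce)).mp hzero
        filter_upwards [heq0] with ω hω
        simp only [Pi.zero_apply] at hω
        linarith
      obtain ⟨T₀, hT₀, hT₀lt⟩ := hex
      refine ⟨T₀, hT₀, fun T hTT₀ => ?_⟩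
      have h1 : ∫ ω, N T ω ∂μ ≤ ∫ ω, N T₀ ω ∂μ := hE_mono T₀ T hT₀ hTT₀.le
      have h2 : ∫ ω, N T ω ∂μ < n₀ := lt_of_le_of_lt h1 hT₀lt
      nlinarith [hα.1, hα.2]
    · rintro ⟨t, ht0, hlt⟩
      refine ⟨hloc, fun hmart => ?_⟩
      have hcond := hmart.2 0 (t + 1) le_rfl (by linarith)
      have hEeq : ∫ ω, N (t + 1) ω ∂μ = n₀ := by
        rw [← integral_condExp (ℱ.le 0) (f := N (t + 1)), integral_congr_ae hcond, hE0]
      have := hlt (t + 1) (by linarith)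
      rw [hEeq] at this
      nlinarith
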